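/- For every vertex v of a finite graph G and every natural number d ≥ 0, the farness f(v) = Σ_{w ∈ R(v)} dist(v,w) satisfies f(v) ≥ f_d(v) + (d+1)·γ_{d+1}(v) + (d+2)·(r(v) − n_{d+1}(v)), where R(v) is the set of vertices reachable from v, r(v) = |R(v)|, f_d(v) is the sum of dist(v,w) over vertices w with dist(v,w) ≤ d, γ_{d+1}(v) is the number of vertices at distance exactly d+1 from v, and n_{d+1}(v) is the number of vertices at distance at most d+1 from v. -/

import Mathlib

open Finset

variable {V : Type*}

/-- `steps r n v w` : there is a walk of length `n` from `v` to `w` along relation `r`. -/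
def steps (r : V → V → Prop) : ℕ → V → V → Prop
  | 0, v, w => v = w
  | n+1, v, w => ∃ u, r v u ∧ steps r n u w

/-- `w` is reachable from `v`. -/
def reach (r : V → V → Prop) (v w : V) : Prop := ∃ n, steps r n v w

/-- shortest-path distance (number of edges). -/
noncomputable def ddist (r : V → V → Prop) (v w : V) : ℕ := sInf {n | steps r n v w}

open scoped Classical in
/-- set of vertices reachable from `v`. -/
noncomputable def Rset (r : V → V → Prop) [Fintype V] (v : V) : Finset V :=
  univ.filter (fun w => reach r v w)

/-- number of vertices reachable from `v`. -/
noncomputable def rnum (r : V → V → Prop) [Fintype V] (v : V) : ℕ := (Rset r v).card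

/-- farness of `v`. -/
noncomputable def farn (r : V → V → Prop) [Fintype V] (v : V) : ℕ :=
  ∑ w ∈ Rset r v, ddist r v w

open scoped Classical in
/-- ball of radius `d` around `v`. -/
noncomputable def ball (r : V → V → Prop) [Fintype V] (v : V) (d : ℕ) : Finset V :=
  univ.filter (fun w => reach r v w ∧ ddist r v w ≤ d)

/-- number of vertices at distance at most `d` from `v`. -/
noncomputable def nball (r : V → V → Prop) [Fintype V] (v : V) (d : ℕ) : ℕ := (ball r v d).card

open scoped Classical in
/-- set of vertices at distance exactly `d` from `v`. -/
noncomputable def sphere (r : V → V → Prop) [Fintype V] (v : V) (d : ℕ) : Finset V :=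
  univ.filter (fun w => reach r v w ∧ ddist r v w = d)

/-- number of vertices at distance exactly `d` from `v`. -/
noncomputable def gam (r : V → V → Prop) [Fintype V] (v : V) (d : ℕ) : ℕ := (sphere r v d).card

/-- farness of `v` restricted to distance at most `d`. -/
noncomputable def fd (r : V → V → Prop) [Fintype V] (v : V) (d : ℕ) : ℕ :=
  ∑ w ∈ ball r v d, ddist r v w

open scoped Classical in
/-- out-degree of `u`. -/
noncomputable def outdeg (r : V → V → Prop) [Fintype V] (u : V) : ℕ :=
  (univ.filter (fun w => r u w)).card

/-- `gtil r v d` = upper bound γ̃_{d+1}(v) = Σ_{u : dist(v,u)=d} outdeg(u). -/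
noncomputable def gtil (r : V → V → Prop) [Fintype V] (v : V) (d : ℕ) : ℕ :=
  ∑ u ∈ sphere r v d, outdeg r u

theorem farness_lower_bound_basic [Fintype V] (r : V → V → Prop) (v : V) (d : ℕ) :
    (farn r v : ℤ) ≥
      (fd r v d : ℤ) + (d + 1) * (gam r v (d + 1) : ℤ)
        + (d + 2) * ((rnum r v : ℤ) - (nball r v (d + 1) : ℤ)) := by

  classical
  have hA : ∀ w ∈ ball r v d, reach r v w ∧ ddist r v w ≤ d := by
    intro w hw; simpa [ball] using hw
  have hB : ∀ w ∈ sphere r v (d+1), reach r v w ∧ ddist r v w = d+1 := by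
    intro w hw; simpa [sphere] using hw
  have hdisj : Disjoint (ball r v d) (sphere r v (d+1)) := by
    rw [Finset.disjoint_left]
    intro w h1 h2
    have h3 := (hA w h1).2
    have h4 := (hB w h2).2
    omega
  have hunion : ball r v (d+1) = ball r v d ∪ sphere r v (d+1) := by
    ext w
    simp only [ball, sphere, Finset.mem_filter, Finset.mem_union, Finset.mem_univ, true_and]
    constructor
    · rintro ⟨h, hd⟩
      rcases Nat.lt_or_ge (ddist r v w) (d+1) with h' | h'
      · exact Or.inl ⟨h, by omega⟩
      · exact Or.inr ⟨h, by omega⟩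
    · rintro (⟨h, hd⟩ | ⟨h, hd⟩) <;> exact ⟨h, by omega⟩
  have hsub : ball r v (d+1) ⊆ Rset r v := by
    intro w hw
    simp only [ball, Finset.mem_filter] at hw
    simp [Rset, hw.2.1]
  have hsplit : Rset r v = ball r v (d+1) ∪ (Rset r v \ ball r v (d+1)) :=
    (Finset.union_sdiff_of_subset hsub).symm
  have hsumB : ∑ w ∈ sphere r v (d+1), ddist r v w = (d+1) * gam r v (d+1) := by
    rw [Finset.sum_congr rfl (fun w hw => (hB w hw).2), Finset.sum_const, gam,
      smul_eq_mul, mul_comm]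
  have hsumC : (d+2) * (Rset r v \ ball r v (d+1)).card
      ≤ ∑ w ∈ Rset r v \ ball r v (d+1), ddist r v w := by
    rw [mul_comm, ← smul_eq_mul]
    apply Finset.card_nsmul_le_sum
    intro w hw
    rcases Finset.mem_sdiff.mp hw with ⟨hw1, hw2⟩
    have hr : reach r v w := by simpa [Rset] using hw1
    have : ¬ (ddist r v w ≤ d+1) := by
      intro h; exact hw2 (by simp [ball, hr, h])
    omega
  have hcardC : (Rset r v \ ball r v (d+1)).card = rnum r v - nball r v (d+1) := by
    rw [Finset.card_sdiff_of_subset hsub]; rfl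
  have hnb : nball r v (d+1) = (ball r v d).card + gam r v (d+1) := by
    rw [nball, hunion, Finset.card_union_of_disjoint hdisj]; rfl
  have hle : nball r v (d+1) ≤ rnum r v := Finset.card_le_card hsub
  have hfarn : farn r v = fd r v d + (d+1) * gam r v (d+1)
      + ∑ w ∈ Rset r v \ ball r v (d+1), ddist r v w := by
    rw [farn]
    conv_lhs => rw [hsplit]
    rw [Finset.sum_union Finset.disjoint_sdiff, hunion, Finset.sum_union hdisj, hsumB]; rfl
  have hnat : fd r v d + (d+1) * gam r v (d+1) + (d+2) * (rnum r v - nball r v (d+1))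
      ≤ farn r v := by
    rw [hfarn, ← hcardC]
    exact Nat.add_le_add_left hsumC _
  zify [hle] at hnat
  linarith
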